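/- Theorem 1 of the paper (equivalence of history MDPs): if prior matching holds and the parameter update criterion holds, then the history MDP constructed from the Bayesian partially observable RL problem and the history MDP constructed from the GBA-POMDP are identical; concretely, for every time t, every action sequence a₀,…,a_t and observation sequence o₁,…,o_t whose observable history h_t has nonzero probability under both joints: (i) the history reward functions agree, i.e. ∑_{s_{0:t}} p^BRL(s_{0:t} | h_t) · R(s_t, a_t) = ∑_{s_{0:t}} p^GBA(s_{0:t} | h_t) · R(s_t, a_t); and (ii) the history transition functions agree, i.e. for every observation o_{t+1}, p^BRL(o_{t+1} | h_t, a_t) = p^GBA(o_{t+1} | h_t, a_t). -/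

import Mathlib

open scoped ENNReal BigOperators Classical

variable {S A O 𝔇 : Type*}
  [Fintype S] [Nonempty S] [Fintype A] [Nonempty A] [Fintype O] [Nonempty O]
  [Fintype 𝔇]

/-- Joint probability `P(D, H_t)` of a dynamics model `D` together with a full
history `H_t = (s₀,a₀,s₁,o₁,…,a_{t-1},s_t,o_t)`:
`P(D,H_t) = p_𝔇(D) · p₀(s₀) · ∏_{i=0}^{t-1} D(s_{i+1},o_{i+1} | s_i,a_i)`.
Here `s i` is `s_i`, `a i` is `a_i` and `o i` is `o_{i+1}`. -/
noncomputable def jointP (p𝔇 : PMF 𝔇) (p₀ : PMF S)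
    (dyn : 𝔇 → S → A → PMF (S × O)) (t : ℕ)
    (D : 𝔇) (s : Fin (t + 1) → S) (a : Fin t → A) (o : Fin t → O) : ℝ≥0∞ :=
  p𝔇 D * p₀ (s 0) * ∏ i : Fin t, dyn D (s i.castSucc) (a i) (s i.succ, o i)

/-- Probability of the observable history `h_t = (a₀,o₁,…,a_{t-1},o_t)`:
the joint marginalized over the dynamics model and the state sequence. -/
noncomputable def histP (p𝔇 : PMF 𝔇) (p₀ : PMF S)
    (dyn : 𝔇 → S → A → PMF (S × O)) (t : ℕ)
    (a : Fin t → A) (o : Fin t → O) : ℝ≥0∞ :=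
  ∑ D : 𝔇, ∑ s : Fin (t + 1) → S, jointP p𝔇 p₀ dyn t D s a o

/-- The belief `p(D, s_t | h_t)` over the dynamics model and current state given
the observable history. -/
noncomputable def belief (p𝔇 : PMF 𝔇) (p₀ : PMF S)
    (dyn : 𝔇 → S → A → PMF (S × O)) (t : ℕ)
    (a : Fin t → A) (o : Fin t → O) (D : 𝔇) (st : S) : ℝ≥0∞ :=
  (∑ s : Fin t → S, jointP p𝔇 p₀ dyn t D (Fin.snoc s st) a o) /
    histP p𝔇 p₀ dyn t a o

/-- The mixture weight `p(s_{0:t} | h_t)`: posterior of a state sequence given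
the observable history. -/
noncomputable def seqPost (p𝔇 : PMF 𝔇) (p₀ : PMF S)
    (dyn : 𝔇 → S → A → PMF (S × O)) (t : ℕ)
    (a : Fin t → A) (o : Fin t → O) (s : Fin (t + 1) → S) : ℝ≥0∞ :=
  (∑ D : 𝔇, jointP p𝔇 p₀ dyn t D s a o) / histP p𝔇 p₀ dyn t a o

/-- The model posterior `p(D | H_t)` given a full history. -/
noncomputable def modelPost (p𝔇 : PMF 𝔇) (p₀ : PMF S)
    (dyn : 𝔇 → S → A → PMF (S × O)) (t : ℕ)
    (s : Fin (t + 1) → S) (a : Fin t → A) (o : Fin t → O) (D : 𝔇) : ℝ≥0∞ :=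
  jointP p𝔇 p₀ dyn t D s a o / ∑ D' : 𝔇, jointP p𝔇 p₀ dyn t D' s a o

/-- The one-step predictive `p(s_{t+1}, o_{t+1} | H_t, a_t)
= ∑_D P(D,H_{t+1}) / ∑_D P(D,H_t)` where `H_{t+1} = (H_t,a_t,s_{t+1},o_{t+1})`. -/
noncomputable def predBRL (p𝔇 : PMF 𝔇) (p₀ : PMF S)
    (dyn : 𝔇 → S → A → PMF (S × O)) (t : ℕ)
    (s : Fin (t + 1) → S) (a : Fin t → A) (o : Fin t → O)
    (act : A) (s' : S) (o' : O) : ℝ≥0∞ :=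
  (∑ D : 𝔇,
      jointP p𝔇 p₀ dyn (t + 1) D (Fin.snoc s s') (Fin.snoc a act) (Fin.snoc o o')) /
    ∑ D : 𝔇, jointP p𝔇 p₀ dyn t D s a o

variable {Θ : Type*}

/-- The parameter `θ_{H_t}` associated with a full history, defined recursively by
`θ_{H_0} = θ₀` and `θ_{H_{i+1}} = U(θ_{H_i}, s_i, a_i, s_{i+1}, o_{i+1})`. -/
def paramOf (U : Θ → S → A → S → O → Θ) (θ₀ : Θ) :
    (t : ℕ) → (Fin (t + 1) → S) → (Fin t → A) → (Fin t → O) → Θ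
  | 0, _, _, _ => θ₀
  | t + 1, s, a, o =>
      U (paramOf U θ₀ t (fun i => s i.castSucc) (fun i => a i.castSucc)
          (fun i => o i.castSucc))
        (s (Fin.last t).castSucc) (a (Fin.last t)) (s (Fin.last (t + 1)))
        (o (Fin.last t))

/-- Prior matching: the initial parameter induces the same one-step dynamics as
the prior over models, `∑_D p_𝔇(D)·D(s₁,o₁|s₀,a₀) = p(s₁,o₁|θ₀,s₀,a₀)`. -/
def PriorMatching (p𝔇 : PMF 𝔇) (dyn : 𝔇 → S → A → PMF (S × O))
    (model : Θ → S → A → PMF (S × O)) (θ₀ : Θ) : Prop :=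
  ∀ (s₀ : S) (a₀ : A) (s₁ : S) (o₁ : O),
    ∑ D : 𝔇, p𝔇 D * dyn D s₀ a₀ (s₁, o₁) = model θ₀ s₀ a₀ (s₁, o₁)

/-- Parameter update criterion: if at stage `t` the Bayesian one-step predictive
matches the parameterized one for all (nonzero-probability) full histories, then
the same holds at stage `t+1`. -/
def ParamUpdateCriterion (p𝔇 : PMF 𝔇) (p₀ : PMF S)
    (dyn : 𝔇 → S → A → PMF (S × O)) (model : Θ → S → A → PMF (S × O))
    (U : Θ → S → A → S → O → Θ) (θ₀ : Θ) : Prop :=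
  ∀ t : ℕ,
    (∀ (s : Fin (t + 1) → S) (a : Fin t → A) (o : Fin t → O),
        (∑ D : 𝔇, jointP p𝔇 p₀ dyn t D s a o) ≠ 0 →
        ∀ (act : A) (s' : S) (o' : O),
          predBRL p𝔇 p₀ dyn t s a o act s' o' =
            model (paramOf U θ₀ t s a o) (s (Fin.last t)) act (s', o')) →
    (∀ (s : Fin (t + 2) → S) (a : Fin (t + 1) → A) (o : Fin (t + 1) → O),
        (∑ D : 𝔇, jointP p𝔇 p₀ dyn (t + 1) D s a o) ≠ 0 →
        ∀ (act : A) (s' : S) (o' : O),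
          predBRL p𝔇 p₀ dyn (t + 1) s a o act s' o' =
            model (paramOf U θ₀ (t + 1) s a o) (s (Fin.last (t + 1))) act (s', o'))

/-- The GBA-POMDP joint probability over full histories (for given actions):
`P^GBA(H_t) = p₀(s₀) · ∏_{i=0}^{t-1} p(s_{i+1},o_{i+1} | θ_{H_i}, s_i, a_i)`. -/
noncomputable def jointGBA (p₀ : PMF S) (model : Θ → S → A → PMF (S × O))
    (U : Θ → S → A → S → O → Θ) (θ₀ : Θ) :
    (t : ℕ) → (Fin (t + 1) → S) → (Fin t → A) → (Fin t → O) → ℝ≥0∞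
  | 0, s, _, _ => p₀ (s 0)
  | t + 1, s, a, o =>
      jointGBA p₀ model U θ₀ t (fun i => s i.castSucc) (fun i => a i.castSucc)
          (fun i => o i.castSucc) *
        model
          (paramOf U θ₀ t (fun i => s i.castSucc) (fun i => a i.castSucc)
            (fun i => o i.castSucc))
          (s (Fin.last t).castSucc) (a (Fin.last t))
          (s (Fin.last (t + 1)), o (Fin.last t))

/-- The GBA-POMDP posterior over state sequences, `p^GBA(s_{0:t} | h_t)`. -/
noncomputable def seqPostGBA (p₀ : PMF S) (model : Θ → S → A → PMF (S × O))
    (U : Θ → S → A → S → O → Θ) (θ₀ : Θ) (t : ℕ)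
    (a : Fin t → A) (o : Fin t → O) (s : Fin (t + 1) → S) : ℝ≥0∞ :=
  jointGBA p₀ model U θ₀ t s a o /
    ∑ s' : Fin (t + 1) → S, jointGBA p₀ model U θ₀ t s' a o

/-- The BPORL predictive observation probability `p^BRL(o_{t+1} | h_t, a_t)`. -/
noncomputable def obsPredBRL (p𝔇 : PMF 𝔇) (p₀ : PMF S)
    (dyn : 𝔇 → S → A → PMF (S × O)) (t : ℕ)
    (a : Fin t → A) (o : Fin t → O) (act : A) (o' : O) : ℝ≥0∞ :=
  (∑ D : 𝔇, ∑ s : Fin (t + 2) → S,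
      jointP p𝔇 p₀ dyn (t + 1) D s (Fin.snoc a act) (Fin.snoc o o')) /
    histP p𝔇 p₀ dyn t a o

/-- The GBA-POMDP predictive observation probability `p^GBA(o_{t+1} | h_t, a_t)`. -/
noncomputable def obsPredGBA (p₀ : PMF S) (model : Θ → S → A → PMF (S × O))
    (U : Θ → S → A → S → O → Θ) (θ₀ : Θ) (t : ℕ)
    (a : Fin t → A) (o : Fin t → O) (act : A) (o' : O) : ℝ≥0∞ :=
  (∑ s : Fin (t + 2) → S,
      jointGBA p₀ model U θ₀ (t + 1) s (Fin.snoc a act) (Fin.snoc o o')) /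
    ∑ s : Fin (t + 1) → S, jointGBA p₀ model U θ₀ t s a o

set_option linter.unusedSectionVars false

section Aux

variable {S A O 𝔇 : Type*}
  [Fintype S] [Nonempty S] [Fintype A] [Nonempty A] [Fintype O] [Nonempty O]
  [Fintype 𝔇] {Θ : Type*}

lemma jointP_snoc (p𝔇 : PMF 𝔇) (p₀ : PMF S)
    (dyn : 𝔇 → S → A → PMF (S × O)) (t : ℕ)
    (D : 𝔇) (s : Fin (t + 1) → S) (a : Fin t → A) (o : Fin t → O)
    (act : A) (s' : S) (o' : O) :
    jointP p𝔇 p₀ dyn (t + 1) D (Fin.snoc s s') (Fin.snoc a act) (Fin.snoc o o') =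
      jointP p𝔇 p₀ dyn t D s a o * dyn D (s (Fin.last t)) act (s', o') := by
  unfold jointP
  have h0 : (Fin.snoc s s' : Fin (t + 2) → S) 0 = s 0 := by
    rw [← Fin.castSucc_zero, Fin.snoc_castSucc]
  rw [Fin.prod_univ_castSucc, h0]
  simp only [Fin.snoc_castSucc, Fin.succ_castSucc, Fin.snoc_last, Fin.succ_last]
  ring

lemma jointP_ne_top (p𝔇 : PMF 𝔇) (p₀ : PMF S)
    (dyn : 𝔇 → S → A → PMF (S × O)) (t : ℕ)
    (D : 𝔇) (s : Fin (t + 1) → S) (a : Fin t → A) (o : Fin t → O) :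
    jointP p𝔇 p₀ dyn t D s a o ≤ 1 := by
  unfold jointP
  calc p𝔇 D * p₀ (s 0) * ∏ i : Fin t, dyn D (s i.castSucc) (a i) (s i.succ, o i)
      ≤ 1 * 1 * 1 := by
        gcongr
        · exact p𝔇.coe_le_one D
        · exact p₀.coe_le_one _
        · exact Finset.prod_le_one (fun _ _ => zero_le)
            (fun i _ => (dyn D (s i.castSucc) (a i)).coe_le_one _)
    _ = 1 := by ring

lemma sum_jointP_ne_top (p𝔇 : PMF 𝔇) (p₀ : PMF S)
    (dyn : 𝔇 → S → A → PMF (S × O)) (t : ℕ)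
    (s : Fin (t + 1) → S) (a : Fin t → A) (o : Fin t → O) :
    (∑ D : 𝔇, jointP p𝔇 p₀ dyn t D s a o) ≠ ⊤ :=
  (ENNReal.sum_lt_top.2 fun D _ =>
    lt_of_le_of_lt (jointP_ne_top p𝔇 p₀ dyn t D s a o) ENNReal.one_lt_top).ne

lemma sum_p𝔇 (p𝔇 : PMF 𝔇) : ∑ D : 𝔇, p𝔇 D = 1 := by
  rw [← tsum_fintype (L := SummationFilter.unconditional _)]; exact p𝔇.tsum_coe

lemma pred_all (p𝔇 : PMF 𝔇) (p₀ : PMF S)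
    (dyn : 𝔇 → S → A → PMF (S × O)) (model : Θ → S → A → PMF (S × O))
    (U : Θ → S → A → S → O → Θ) (θ₀ : Θ)
    (hprior : PriorMatching p𝔇 dyn model θ₀)
    (hcrit : ParamUpdateCriterion p𝔇 p₀ dyn model U θ₀) :
    ∀ (t : ℕ) (s : Fin (t + 1) → S) (a : Fin t → A) (o : Fin t → O),
      (∑ D : 𝔇, jointP p𝔇 p₀ dyn t D s a o) ≠ 0 →
      ∀ (act : A) (s' : S) (o' : O),
        predBRL p𝔇 p₀ dyn t s a o act s' o' =
          model (paramOf U θ₀ t s a o) (s (Fin.last t)) act (s', o') := by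
  intro t
  induction t with
  | zero =>
    intro s a o hne act s' o'
    have hden : (∑ D : 𝔇, jointP p𝔇 p₀ dyn 0 D s a o) = p₀ (s 0) := by
      simp [jointP, ← Finset.sum_mul, sum_p𝔇]
    have hnum : (∑ D : 𝔇, jointP p𝔇 p₀ dyn 1 D (Fin.snoc s s')
        (Fin.snoc a act) (Fin.snoc o o')) =
        p₀ (s 0) * model θ₀ (s 0) act (s', o') := by
      rw [← hprior (s 0) act s' o', Finset.mul_sum]
      refine Finset.sum_congr rfl fun D _ => ?_
      rw [jointP_snoc]
      have : s (Fin.last 0) = s 0 := rfl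
      rw [this]
      simp [jointP]
      ring
    have h0 : p₀ (s 0) ≠ 0 := by
      intro h; apply hne; rw [hden, h]
    unfold predBRL
    rw [hnum, hden, mul_div_assoc,
      ENNReal.mul_div_cancel h0 (p₀.apply_ne_top _)]
    rfl
  | succ t ih => exact hcrit t ih

lemma joint_eq (p𝔇 : PMF 𝔇) (p₀ : PMF S)
    (dyn : 𝔇 → S → A → PMF (S × O)) (model : Θ → S → A → PMF (S × O))
    (U : Θ → S → A → S → O → Θ) (θ₀ : Θ)
    (hprior : PriorMatching p𝔇 dyn model θ₀)
    (hcrit : ParamUpdateCriterion p𝔇 p₀ dyn model U θ₀) :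
    ∀ (t : ℕ) (s : Fin (t + 1) → S) (a : Fin t → A) (o : Fin t → O),
      jointGBA p₀ model U θ₀ t s a o = ∑ D : 𝔇, jointP p𝔇 p₀ dyn t D s a o := by
  intro t
  induction t with
  | zero =>
    intro s a o
    simp [jointGBA, jointP, ← Finset.sum_mul, sum_p𝔇]
  | succ t ih =>
    intro s a o
    set s₀ : Fin (t + 1) → S := fun i => s i.castSucc with hs₀
    set a₀ : Fin t → A := fun i => a i.castSucc with ha₀
    set o₀ : Fin t → O := fun i => o i.castSucc with ho₀
    have hsnoc : s = Fin.snoc s₀ (s (Fin.last (t + 1))) := (Fin.snoc_init_self s).symm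
    have hasnoc : a = Fin.snoc a₀ (a (Fin.last t)) := (Fin.snoc_init_self a).symm
    have hosnoc : o = Fin.snoc o₀ (o (Fin.last t)) := (Fin.snoc_init_self o).symm
    have hGBA : jointGBA p₀ model U θ₀ (t + 1) s a o =
        jointGBA p₀ model U θ₀ t s₀ a₀ o₀ *
          model (paramOf U θ₀ t s₀ a₀ o₀) (s₀ (Fin.last t)) (a (Fin.last t))
            (s (Fin.last (t + 1)), o (Fin.last t)) := rfl
    have hsum : ∑ D : 𝔇, jointP p𝔇 p₀ dyn (t + 1) D s a o =
        ∑ D : 𝔇, jointP p𝔇 p₀ dyn t D s₀ a₀ o₀ *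
          dyn D (s₀ (Fin.last t)) (a (Fin.last t)) (s (Fin.last (t + 1)), o (Fin.last t)) := by
      refine Finset.sum_congr rfl fun D _ => ?_
      conv_lhs => rw [hsnoc, hasnoc, hosnoc]
      exact jointP_snoc p𝔇 p₀ dyn t D s₀ a₀ o₀ _ _ _
    by_cases hz : (∑ D : 𝔇, jointP p𝔇 p₀ dyn t D s₀ a₀ o₀) = 0
    · rw [hGBA, ih s₀ a₀ o₀, hz, zero_mul, hsum]
      refine (Finset.sum_eq_zero fun D hD => ?_).symm
      rw [(Finset.sum_eq_zero_iff).1 hz D (Finset.mem_univ D), zero_mul]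
    · have hpred := pred_all p𝔇 p₀ dyn model U θ₀ hprior hcrit t s₀ a₀ o₀ hz
        (a (Fin.last t)) (s (Fin.last (t + 1))) (o (Fin.last t))
      unfold predBRL at hpred
      have hnum : (∑ D : 𝔇, jointP p𝔇 p₀ dyn (t + 1) D (Fin.snoc s₀ (s (Fin.last (t+1))))
          (Fin.snoc a₀ (a (Fin.last t))) (Fin.snoc o₀ (o (Fin.last t)))) =
          model (paramOf U θ₀ t s₀ a₀ o₀) (s₀ (Fin.last t)) (a (Fin.last t))
            (s (Fin.last (t + 1)), o (Fin.last t)) *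
            ∑ D : 𝔇, jointP p𝔇 p₀ dyn t D s₀ a₀ o₀ := by
        rw [← hpred, ENNReal.div_mul_cancel hz (sum_jointP_ne_top p𝔇 p₀ dyn t s₀ a₀ o₀)]
      rw [hGBA, ih s₀ a₀ o₀]
      conv_rhs => rw [hsnoc, hasnoc, hosnoc]
      rw [hnum, mul_comm]

end Aux
/-- **Theorem 1 (equivalence of history MDPs).** If prior matching and the
parameter update criterion hold, then the history MDP of the BPORL problem and
the history MDP of the GBA-POMDP are identical: for every time `t`, every
action sequence `a₀,…,a_t` and observation sequence `o₁,…,o_t` whose observable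
history `h_t` has nonzero probability under both joints, (i) the history reward
functions agree, `∑_{s_{0:t}} p^BRL(s_{0:t}|h_t)·R(s_t,a_t) =
∑_{s_{0:t}} p^GBA(s_{0:t}|h_t)·R(s_t,a_t)`, and (ii) the history transition
functions agree, `p^BRL(o_{t+1}|h_t,a_t) = p^GBA(o_{t+1}|h_t,a_t)` for every
`o_{t+1}`. -/
theorem history_MDPs_identical (p𝔇 : PMF 𝔇) (p₀ : PMF S)
    (dyn : 𝔇 → S → A → PMF (S × O)) (model : Θ → S → A → PMF (S × O))
    (U : Θ → S → A → S → O → Θ) (θ₀ : Θ) (R : S → A → ℝ)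
    (hprior : PriorMatching p𝔇 dyn model θ₀)
    (hcrit : ParamUpdateCriterion p𝔇 p₀ dyn model U θ₀)
    (t : ℕ) (a : Fin t → A) (act : A) (o : Fin t → O)
    (hBRL : histP p𝔇 p₀ dyn t a o ≠ 0)
    (hGBA : (∑ s : Fin (t + 1) → S, jointGBA p₀ model U θ₀ t s a o) ≠ 0) :
    (∑ s : Fin (t + 1) → S,
        (seqPost p𝔇 p₀ dyn t a o s).toReal * R (s (Fin.last t)) act =
      ∑ s : Fin (t + 1) → S,
        (seqPostGBA p₀ model U θ₀ t a o s).toReal * R (s (Fin.last t)) act) ∧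
    (∀ o' : O,
      obsPredBRL p𝔇 p₀ dyn t a o act o' =
        obsPredGBA p₀ model U θ₀ t a o act o') := by
  have hjoint := joint_eq p𝔇 p₀ dyn model U θ₀ hprior hcrit
  have hhist : histP p𝔇 p₀ dyn t a o =
      ∑ s : Fin (t + 1) → S, jointGBA p₀ model U θ₀ t s a o := by
    unfold histP
    rw [Finset.sum_comm]
    exact Finset.sum_congr rfl fun s _ => (hjoint t s a o).symm
  constructor
  · refine Finset.sum_congr rfl fun s _ => ?_
    unfold seqPost seqPostGBA
    rw [← hjoint t s a o, hhist]
  · intro o'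
    unfold obsPredBRL obsPredGBA
    rw [hhist, Finset.sum_comm]
    congr 1
    exact Finset.sum_congr rfl fun s _ => (hjoint (t + 1) s _ _).symm
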